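/- Let $n\leq N$ and $q$ be positive integers, $E_0>0$, $K>0$ and $\lambda<0$. For each integer $k$ with $n\leq k\leq N$ let $\Lambda_k:[0,E_0]\to\mathbb{R}$ satisfy $|\Lambda_k(v)|\leq K v$ for all $v\in[0,E_0]$, and assume additionally $|\Lambda_n(v)-\lambda v|\leq K v^2$ for all $v\in[0,E_0]$. Then for every $\kappa\in(0,1)$ there exist $\delta>0$ and $t_1>0$ with the following property: whenever $t_0\geq t_1$ and $v:[t_0,\infty)\to[0,E_0)$ is differentiable with $v(t_0)\leq\delta$ and $v'(t)=\sum_{k=n}^{N}t^{-k/q}\Lambda_k(v(t))+\rho(t)$ for all $t\geq t_0$, where $\rho:[t_0,\infty)\to\mathbb{R}$ satisfies $|\rho(t)|\leq K\,t^{-(N+1)/q}\,v(t)$, one has $v(t)\,(\gamma_n(t))^{(1-\kappa)|\lambda|}\leq v(t_0)\,(\gamma_n(t_0))^{(1-\kappa)|\lambda|}$ for all $t\geq t_0$. -/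

import Mathlib

set_option maxHeartbeats 800000


open Real Set

/-- The weight function `γ_n (t)` of the paper. -/
noncomputable def gammaFn (n q : ℕ) (t : ℝ) : ℝ :=
  if n = q then t else Real.exp (((q:ℝ) / ((q:ℝ) - (n:ℝ))) * t ^ (1 - (n:ℝ)/(q:ℝ)))

lemma gammaFn_pos (n q : ℕ) {t : ℝ} (ht : 0 < t) : 0 < gammaFn n q t := by
  unfold gammaFn; split
  · exact ht
  · exact Real.exp_pos _

lemma hasDerivAt_gammaFn_rpow (n q : ℕ) (hq : 0 < q) (α : ℝ) {t : ℝ} (ht : 0 < t) :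
    HasDerivAt (fun s => gammaFn n q s ^ α)
      (α * t ^ (-(n:ℝ)/(q:ℝ)) * gammaFn n q t ^ α) t := by
  have hq0 : ((q:ℝ)) ≠ 0 := by positivity
  by_cases h : n = q
  · simp only [gammaFn, if_pos h]
    have := Real.hasDerivAt_rpow_const (x := t) (p := α) (Or.inl ht.ne')
    convert this using 1
    have hnq : -(n:ℝ)/(q:ℝ) = -1 := by rw [h]; field_simp
    rw [hnq, show α - 1 = α + (-1) by ring, Real.rpow_add ht, Real.rpow_neg_one]
    ring
  · have hne : (q:ℝ) - (n:ℝ) ≠ 0 := by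
      have : (n:ℝ) ≠ (q:ℝ) := by exact_mod_cast h
      intro hc; apply this; linarith
    simp only [gammaFn, if_neg h]
    set c : ℝ := (q:ℝ) / ((q:ℝ) - (n:ℝ)) with hc
    set β : ℝ := 1 - (n:ℝ)/(q:ℝ) with hβ
    have hGα : ∀ s : ℝ, Real.exp (c * s ^ β) ^ α = Real.exp (c * α * s ^ β) := by
      intro s
      rw [← Real.exp_mul]; ring_nf
    have hderiv : HasDerivAt (fun s : ℝ => Real.exp (c * α * s ^ β))
        (Real.exp (c * α * t ^ β) * (c * α * (β * t ^ (β - 1)))) t := by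
      have h1 : HasDerivAt (fun s : ℝ => s ^ β) (β * t ^ (β - 1)) t :=
        Real.hasDerivAt_rpow_const (Or.inl ht.ne')
      exact ((h1.const_mul (c * α)).exp)
    have : HasDerivAt (fun s => Real.exp (c * s ^ β) ^ α)
        (Real.exp (c * α * t ^ β) * (c * α * (β * t ^ (β - 1)))) t := by
      simp only [hGα]; exact hderiv
    convert this using 1
    have hcβ : c * β = 1 := by rw [hc, hβ]; field_simp
    have hβ1 : β - 1 = -(n:ℝ)/(q:ℝ) := by rw [hβ]; ring
    rw [hGα, hβ1]
    calc α * t ^ (-(n:ℝ)/(q:ℝ)) * Real.exp (c * α * t ^ β)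
        = Real.exp (c * α * t ^ β) * ((c * β) * α * t ^ (-(n:ℝ)/(q:ℝ))) := by rw [hcβ]; ring
      _ = Real.exp (c * α * t ^ β) * (c * α * (β * t ^ (-(n:ℝ)/(q:ℝ)))) := by ring

lemma rpow_neg_inv_le {q : ℕ} (hq : 0 < q) {c t : ℝ} (hc : 0 < c) (ht : (1/c)^q ≤ t)
    (ht1 : 1 ≤ t) : t ^ (-(1:ℝ)/(q:ℝ)) ≤ c := by
  have ht0 : (0:ℝ) < t := lt_of_lt_of_le one_pos ht1
  have hq0 : (0:ℝ) < (q:ℝ) := by exact_mod_cast hq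
  have h1 : 1/c ≤ t ^ ((1:ℝ)/(q:ℝ)) := by
    calc 1/c = ((1/c)^(q:ℕ)) ^ ((1:ℝ)/(q:ℝ)) := by
          rw [← Real.rpow_natCast (1/c) q, ← Real.rpow_mul (by positivity)]
          rw [mul_one_div, div_self hq0.ne', Real.rpow_one]
      _ ≤ t ^ ((1:ℝ)/(q:ℝ)) := Real.rpow_le_rpow (by positivity) ht (by positivity)
  have hpos : (0:ℝ) < 1/c := by positivity
  have h2 : (t ^ ((1:ℝ)/(q:ℝ)))⁻¹ ≤ (1/c)⁻¹ := inv_anti₀ hpos h1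
  rw [neg_div, Real.rpow_neg ht0.le]
  simpa using h2


/-- Deterministic core of Theorem 2: if the leading averaged drift satisfies
`Λ_n (v) = λ v (1 + O (v))` with `λ < 0` and `|Λ_k (v)| ≤ K v`, then for every
`κ ∈ (0,1)` solutions of `v' = ∑_{k=n}^N t^{-k/q} Λ_k (v) + ρ` with small initial data
decay with the weight `(γ_n (t))^{(1-κ)|λ|}`. -/
theorem averaged_energy_decay (n N q : ℕ) (hn : 0 < n) (hnN : n ≤ N) (hq : 0 < q)
    (E0 K lam : ℝ) (hE0 : 0 < E0) (hK : 0 < K) (hlam : lam < 0)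
    (Λ : ℕ → ℝ → ℝ)
    (hΛb : ∀ k ∈ Finset.Icc n N, ∀ w ∈ Icc (0:ℝ) E0, |Λ k w| ≤ K * w)
    (hΛn : ∀ w ∈ Icc (0:ℝ) E0, |Λ n w - lam * w| ≤ K * w ^ 2) :
    ∀ κ ∈ Ioo (0:ℝ) 1, ∃ δ > 0, ∃ t1 > 0, ∀ t0 ≥ t1,
      ∀ v v' ρ : ℝ → ℝ,
        (∀ t ≥ t0, HasDerivAt v (v' t) t) →
        (∀ t ≥ t0, v t ∈ Ico (0:ℝ) E0) →
        v t0 ≤ δ →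
        (∀ t ≥ t0, v' t =
          (∑ k ∈ Finset.Icc n N, t ^ (-(k:ℝ)/(q:ℝ)) * Λ k (v t)) + ρ t) →
        (∀ t ≥ t0, |ρ t| ≤ K * t ^ (-((N:ℝ) + 1)/(q:ℝ)) * v t) →
        ∀ t ≥ t0, v t * gammaFn n q t ^ ((1 - κ) * |lam|) ≤
          v t0 * gammaFn n q t0 ^ ((1 - κ) * |lam|) := by
  intro κ hκ
  obtain ⟨hκ0, hκ1⟩ := hκ
  have hlamabs : |lam| = -lam := abs_of_neg hlam
  set α : ℝ := (1 - κ) * |lam| with hαdef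
  have hαval : α = (1 - κ) * (-lam) := by rw [hαdef, hlamabs]
  have hα : 0 < α := by rw [hαval]; nlinarith
  have hnN' : (n:ℝ) ≤ (N:ℝ) := by exact_mod_cast hnN
  set M : ℝ := ((N:ℝ) - (n:ℝ) + 1) * K with hM
  have hMpos : 0 < M := by rw [hM]; nlinarith
  set c : ℝ := κ * (-lam) / (4 * M) with hc
  have hcpos : 0 < c := by
    rw [hc]; apply div_pos (by nlinarith) (by nlinarith)
  set δ' : ℝ := κ * (-lam) / (4 * K) with hδ'
  have hδ'pos : 0 < δ' := by
    rw [hδ']; apply div_pos (by nlinarith) (by nlinarith)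
  refine ⟨δ'/2, by positivity, max 1 ((1/c)^q), lt_of_lt_of_le one_pos (le_max_left _ _), ?_⟩
  intro t0 ht0 v v' ρ hv hmem hv0 hode hρ
  have ht01 : 1 ≤ t0 := le_trans (le_max_left _ _) ht0
  have ht0pos : 0 < t0 := lt_of_lt_of_le one_pos ht01
  -- the weight and its derivative
  set G : ℝ → ℝ := fun s => gammaFn n q s ^ α with hGdef
  have hGpos : ∀ s : ℝ, t0 ≤ s → 0 < G s := fun s hs =>
    Real.rpow_pos_of_pos (gammaFn_pos n q (lt_of_lt_of_le ht0pos hs)) _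
  have hGderiv : ∀ s : ℝ, t0 ≤ s →
      HasDerivAt G (α * s ^ (-(n:ℝ)/(q:ℝ)) * G s) s := fun s hs =>
    hasDerivAt_gammaFn_rpow n q hq α (lt_of_lt_of_le ht0pos hs)
  have hgderiv : ∀ s : ℝ, t0 ≤ s →
      HasDerivAt (fun u => v u * G u)
        (v' s * G s + v s * (α * s ^ (-(n:ℝ)/(q:ℝ)) * G s)) s := fun s hs =>
    (hv s hs).mul (hGderiv s hs)
  -- key differential inequality when v s ≤ δ'
  have hkey : ∀ s : ℝ, t0 ≤ s → v s ≤ δ' →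
      v' s + α * s ^ (-(n:ℝ)/(q:ℝ)) * v s ≤ 0 := by
    intro s hs hvs
    have hs1 : 1 ≤ s := le_trans ht01 hs
    have hspos : 0 < s := lt_of_lt_of_le one_pos hs1
    have hsc : s ^ (-(1:ℝ)/(q:ℝ)) ≤ c :=
      rpow_neg_inv_le hq hcpos (le_trans (le_trans (le_max_right _ _) ht0) hs) hs1
    set w : ℝ := v s with hw
    have hwmem : w ∈ Icc (0:ℝ) E0 := ⟨(hmem s hs).1, (hmem s hs).2.le⟩
    have hw0 : 0 ≤ w := hwmem.1
    set A : ℝ := s ^ (-(n:ℝ)/(q:ℝ)) with hA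
    have hA0 : 0 ≤ A := Real.rpow_nonneg hspos.le _
    set b : ℝ := s ^ (-(1:ℝ)/(q:ℝ)) with hb
    have hb0 : 0 ≤ b := Real.rpow_nonneg hspos.le _
    have hexpsplit : s ^ (-((n:ℝ)+1)/(q:ℝ)) = A * b := by
      rw [hA, hb, ← Real.rpow_add hspos]
      congr 1; ring
    -- split the sum
    have hsplit : Finset.Icc n N = insert n (Finset.Icc (n+1) N) := by
      ext k; simp only [Finset.mem_Icc, Finset.mem_insert]; omega
    have hnmem : n ∉ Finset.Icc (n+1) N := by simp [Finset.mem_Icc]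
    have hsum : (∑ k ∈ Finset.Icc n N, s ^ (-(k:ℝ)/(q:ℝ)) * Λ k w)
        = A * Λ n w + ∑ k ∈ Finset.Icc (n+1) N, s ^ (-(k:ℝ)/(q:ℝ)) * Λ k w := by
      rw [hsplit, Finset.sum_insert hnmem]
    have htail : (∑ k ∈ Finset.Icc (n+1) N, s ^ (-(k:ℝ)/(q:ℝ)) * Λ k w)
        ≤ ((N:ℝ) - (n:ℝ)) * (s ^ (-((n:ℝ)+1)/(q:ℝ)) * (K * w)) := by
      have hle : ∀ k ∈ Finset.Icc (n+1) N, s ^ (-(k:ℝ)/(q:ℝ)) * Λ k w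
          ≤ s ^ (-((n:ℝ)+1)/(q:ℝ)) * (K * w) := by
        intro k hk
        rw [Finset.mem_Icc] at hk
        have hk' : k ∈ Finset.Icc n N := by rw [Finset.mem_Icc]; omega
        have h1 : Λ k w ≤ K * w := le_of_abs_le (hΛb k hk' w hwmem)
        have hexp : -(k:ℝ)/(q:ℝ) ≤ -((n:ℝ)+1)/(q:ℝ) := by
          have hkk : (n:ℝ) + 1 ≤ (k:ℝ) := by exact_mod_cast hk.1
          have hq0 : (0:ℝ) < (q:ℝ) := by exact_mod_cast hq
          exact (div_le_div_iff_of_pos_right hq0).2 (by linarith)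
        have h2 : s ^ (-(k:ℝ)/(q:ℝ)) ≤ s ^ (-((n:ℝ)+1)/(q:ℝ)) :=
          Real.rpow_le_rpow_of_exponent_le hs1 hexp
        calc s ^ (-(k:ℝ)/(q:ℝ)) * Λ k w ≤ s ^ (-(k:ℝ)/(q:ℝ)) * (K * w) :=
              mul_le_mul_of_nonneg_left h1 (Real.rpow_nonneg hspos.le _)
          _ ≤ s ^ (-((n:ℝ)+1)/(q:ℝ)) * (K * w) :=
              mul_le_mul_of_nonneg_right h2 (by positivity)
      calc (∑ k ∈ Finset.Icc (n+1) N, s ^ (-(k:ℝ)/(q:ℝ)) * Λ k w)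
          ≤ (Finset.Icc (n+1) N).card • (s ^ (-((n:ℝ)+1)/(q:ℝ)) * (K * w)) :=
            Finset.sum_le_card_nsmul _ _ _ hle
        _ = ((N:ℝ) - (n:ℝ)) * (s ^ (-((n:ℝ)+1)/(q:ℝ)) * (K * w)) := by
            rw [Nat.card_Icc, nsmul_eq_mul]
            congr 1
            have : N + 1 - (n + 1) = N - n := by omega
            rw [this, Nat.cast_sub hnN]
    have hρs : ρ s ≤ K * s ^ (-((n:ℝ)+1)/(q:ℝ)) * w := by
      have h1 := le_of_abs_le (hρ s hs)
      have hexp : -((N:ℝ)+1)/(q:ℝ) ≤ -((n:ℝ)+1)/(q:ℝ) := by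
        have hq0 : (0:ℝ) < (q:ℝ) := by exact_mod_cast hq
        exact (div_le_div_iff_of_pos_right hq0).2 (by linarith)
      have h2 : s ^ (-((N:ℝ)+1)/(q:ℝ)) ≤ s ^ (-((n:ℝ)+1)/(q:ℝ)) :=
        Real.rpow_le_rpow_of_exponent_le hs1 hexp
      calc ρ s ≤ K * s ^ (-((N:ℝ) + 1)/(q:ℝ)) * w := h1
        _ ≤ K * s ^ (-((n:ℝ)+1)/(q:ℝ)) * w := by
            apply mul_le_mul_of_nonneg_right _ hw0
            exact mul_le_mul_of_nonneg_left h2 hK.le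
    have hΛnb : Λ n w ≤ lam * w + K * w ^ 2 := by
      have := abs_le.1 (hΛn w hwmem)
      linarith [this.2]
    -- assemble
    have hKw : K * w ≤ κ * (-lam) / 4 := by
      have : K * w ≤ K * δ' := mul_le_mul_of_nonneg_left hvs hK.le
      rw [hδ'] at this
      calc K * w ≤ K * (κ * (-lam) / (4 * K)) := this
        _ = κ * (-lam) / 4 := by field_simp
    have hMb : M * b ≤ κ * (-lam) / 4 := by
      have : M * b ≤ M * c := mul_le_mul_of_nonneg_left hsc hMpos.le
      rw [hc] at this
      calc M * b ≤ M * (κ * (-lam) / (4 * M)) := this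
        _ = κ * (-lam) / 4 := by field_simp
    have hinner : lam + K * w + M * b + α ≤ 0 := by
      have hκlam : κ * lam ≤ 0 := mul_nonpos_of_nonneg_of_nonpos hκ0.le hlam.le
      have : lam + α = κ * lam := by rw [hαval]; ring
      linarith
    have hstep : (∑ k ∈ Finset.Icc n N, s ^ (-(k:ℝ)/(q:ℝ)) * Λ k w) + ρ s
        ≤ A * (lam * w + K * w ^ 2) + M * b * w * A := by
      rw [hsum]
      have hAΛ : A * Λ n w ≤ A * (lam * w + K * w ^ 2) :=
        mul_le_mul_of_nonneg_left hΛnb hA0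
      have h : ((N:ℝ) - (n:ℝ)) * (s ^ (-((n:ℝ)+1)/(q:ℝ)) * (K * w))
          + K * s ^ (-((n:ℝ)+1)/(q:ℝ)) * w = M * b * w * A := by
        rw [hexpsplit, hM]; ring
      linarith [htail, hρs, h]
    have hfin : A * (lam * w + K * w ^ 2) + M * b * w * A ≤ -(α * A * w) := by
      have hprod : A * (w * (lam + K * w + M * b + α)) ≤ 0 :=
        mul_nonpos_of_nonneg_of_nonpos hA0 (mul_nonpos_of_nonneg_of_nonpos hw0 hinner)
      have heq : A * (lam * w + K * w ^ 2) + M * b * w * A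
          = A * (w * (lam + K * w + M * b + α)) - α * A * w := by ring
      rw [heq]
      linarith [hprod]
    have := hode s hs
    rw [this]
    linarith [le_trans hstep hfin]
  -- monotonicity helper: g is antitone on [t0, T] whenever v ≤ δ' below T
  have hanti : ∀ T : ℝ, t0 ≤ T → (∀ s, t0 ≤ s → s < T → v s ≤ δ') →
      v T * G T ≤ v t0 * G t0 := by
    intro T hT hsb
    rcases eq_or_lt_of_le hT with rfl | hTlt
    · exact le_rfl
    have hconv : Convex ℝ (Icc t0 T) := convex_Icc _ _
    have hcont : ContinuousOn (fun u => v u * G u) (Icc t0 T) := fun s hs =>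
      ((hgderiv s hs.1).continuousAt).continuousWithinAt
    have hdiff : DifferentiableOn ℝ (fun u => v u * G u) (interior (Icc t0 T)) := by
      rw [interior_Icc]
      exact fun s hs => ((hgderiv s hs.1.le).differentiableAt).differentiableWithinAt
    have hd0 : ∀ s ∈ interior (Icc t0 T), deriv (fun u => v u * G u) s ≤ 0 := by
      rw [interior_Icc]
      intro s hs
      rw [(hgderiv s hs.1.le).deriv]
      have hk := hkey s hs.1.le (hsb s hs.1.le hs.2)
      have hGs := hGpos s hs.1.le
      have : v' s * G s + v s * (α * s ^ (-(n:ℝ)/(q:ℝ)) * G s)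
          = (v' s + α * s ^ (-(n:ℝ)/(q:ℝ)) * v s) * G s := by ring
      rw [this]
      exact mul_nonpos_of_nonpos_of_nonneg hk hGs.le
    exact antitoneOn_of_deriv_nonpos hconv hcont hdiff hd0
      (left_mem_Icc.2 hT) (right_mem_Icc.2 hT) hT
  -- G is monotone on [t0, ∞)
  have hGmono : ∀ T : ℝ, t0 ≤ T → G t0 ≤ G T := by
    intro T hT
    have hconv : Convex ℝ (Icc t0 T) := convex_Icc _ _
    have hcont : ContinuousOn G (Icc t0 T) := fun s hs =>
      ((hGderiv s hs.1).continuousAt).continuousWithinAt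
    have hdiff : DifferentiableOn ℝ G (interior (Icc t0 T)) := by
      rw [interior_Icc]
      exact fun s hs => ((hGderiv s hs.1.le).differentiableAt).differentiableWithinAt
    have hd0 : ∀ s ∈ interior (Icc t0 T), 0 ≤ deriv G s := by
      rw [interior_Icc]
      intro s hs
      rw [(hGderiv s hs.1.le).deriv]
      have hspos : 0 < s := lt_of_lt_of_le ht0pos hs.1.le
      have hGs := hGpos s hs.1.le
      have hsA : 0 < s ^ (-(n:ℝ)/(q:ℝ)) := Real.rpow_pos_of_pos hspos _
      exact mul_nonneg (mul_nonneg hα.le hsA.le) hGs.le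
    exact monotoneOn_of_deriv_nonneg hconv hcont hdiff hd0
      (left_mem_Icc.2 hT) (right_mem_Icc.2 hT) hT
  -- bootstrap: v stays below δ'
  have hsmall : ∀ t, t0 ≤ t → v t < δ' := by
    by_contra hcon
    push_neg at hcon
    obtain ⟨t₂, ht₂, hvt₂⟩ := hcon
    set E : Set ℝ := Ici t0 ∩ v ⁻¹' (Ici δ') with hE
    have hEne : E.Nonempty := ⟨t₂, ht₂, hvt₂⟩
    have hEc : IsClosed E := by
      apply ContinuousOn.preimage_isClosed_of_isClosed
        (fun s hs => ((hv s hs).continuousAt).continuousWithinAt) isClosed_Ici isClosed_Ici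
    have hbdd : BddBelow E := ⟨t0, fun s hs => hs.1⟩
    set T : ℝ := sInf E with hT
    have hTE : T ∈ E := hEc.csInf_mem hEne hbdd
    have hTt0 : t0 ≤ T := hTE.1
    have hlt : ∀ s, t0 ≤ s → s < T → v s ≤ δ' := by
      intro s hs hsT
      by_contra hd
      push_neg at hd
      exact absurd (csInf_le hbdd ⟨hs, hd.le⟩) (not_le.2 hsT)
    have hgT := hanti T hTt0 hlt
    have hGT := hGmono T hTt0
    have hGt0 := hGpos t0 le_rfl
    have hGTpos := hGpos T hTt0
    have hv00 : 0 ≤ v t0 := (hmem t0 le_rfl).1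
    have : v T * G T ≤ (δ'/2) * G T := by
      calc v T * G T ≤ v t0 * G t0 := hgT
        _ ≤ (δ'/2) * G t0 := mul_le_mul_of_nonneg_right hv0 hGt0.le
        _ ≤ (δ'/2) * G T := mul_le_mul_of_nonneg_left hGT (by positivity)
    have hvT : v T ≤ δ'/2 := le_of_mul_le_mul_right this hGTpos
    have : δ' ≤ v T := hTE.2
    linarith
  -- conclusion
  intro t ht
  exact hanti t ht (fun s hs _ => (hsmall s hs).le)
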